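/- For all integers k, c ≥ 2, there does not exist a splitting 2-((k−1)c²+1, k×c, 1) design. -/
import Mathlib


/-- A `k × c` block with entries in `X`: each point of `X` occurs at most once
in the array (i.e. the array of entries is injective). -/
def IsBlock {X : Type*} (k c : ℕ) (B : Fin k → Fin c → X) : Prop :=
  Function.Injective fun p : Fin k × Fin c => B p.1 p.2

/-- The points of `T` occur in pairwise distinct rows of the block `B`. -/
def OccursInDistinctRows {X : Type*} {k c : ℕ} (B : Fin k → Fin c → X)
    (T : Finset X) : Prop :=
  ∃ f : X → Fin k, Set.InjOn f ↑T ∧ ∀ x ∈ T, ∃ j : Fin c, B (f x) j = x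

/-- A splitting `t`-`(v, k × c, λ)` design on point set `X`, with blocks indexed by `ι`:
every `t`-subset of points occurs in `t` pairwise distinct rows of exactly `lam` blocks. -/
structure IsSplittingDesign {X ι : Type*} [Fintype X] [Fintype ι]
    (t v k c lam : ℕ) (B : ι → Fin k → Fin c → X) : Prop where
  card_points : Fintype.card X = v
  block : ∀ i, IsBlock k c (B i)
  balance : ∀ T : Finset X, T.card = t →
    Nat.card {i : ι // OccursInDistinctRows (B i) T} = lam

/-- Existence of a splitting `t`-`(v, k × c, lam)` design. -/
def SplittingDesignExists (t v k c lam : ℕ) : Prop :=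
  ∃ (ι : Type) (_ : Fintype ι) (B : ι → Fin k → Fin c → Fin v),
    IsSplittingDesign t v k c lam B

open Finset

section Helpers

variable {v k c : ℕ} {ι : Type} [Fintype ι] (B : ι → Fin k → Fin c → Fin v)

/-- Pair `(p,q)` occurs in distinct rows of block `i` (concrete form). -/
def PairInBlock (i : ι) (p q : Fin v) : Prop :=
  ∃ a b : Fin k, ∃ j j' : Fin c, a ≠ b ∧ B i a j = p ∧ B i b j' = q

lemma occurs_iff_pairInBlock (i : ι) (p q : Fin v) (hpq : p ≠ q) :
    OccursInDistinctRows (B i) {p, q} ↔ PairInBlock B i p q := by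
  constructor
  · rintro ⟨f, hinj, hmem⟩
    obtain ⟨j, hj⟩ := hmem p (by simp)
    obtain ⟨j', hj'⟩ := hmem q (by simp)
    refine ⟨f p, f q, j, j', fun h => hpq (hinj (by simp) (by simp) h), hj, hj'⟩
  · rintro ⟨a, b, j, j', hab, hj, hj'⟩
    refine ⟨fun z => if z = p then a else b, ?_, ?_⟩
    · intro z hz w hw hzw
      simp only [coe_insert, coe_singleton, Set.mem_insert_iff, Set.mem_singleton_iff] at hz hw
      rcases hz with rfl | rfl <;> rcases hw with rfl | rfl <;>
        simp_all [if_neg (Ne.symm hpq)]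
    · intro z hz
      simp only [mem_insert, mem_singleton] at hz
      rcases hz with rfl | rfl
      · exact ⟨j, by simpa using hj⟩
      · exact ⟨j', by simp [if_neg (Ne.symm hpq)]; exact hj'⟩

/-- Witness set for pair `pq` in block `i`. -/
def wset (i : ι) (pq : Fin v × Fin v) : Finset ((Fin k × Fin c) × (Fin k × Fin c)) :=
  (univ.filter fun w : (Fin k × Fin c) × (Fin k × Fin c) => ¬ w.1.1 = w.2.1).filter
    (fun w => (B i w.1.1 w.1.2, B i w.2.1 w.2.2) = pq)

lemma wset_card_le_one (hB : ∀ i, IsBlock k c (B i)) (i : ι) (pq : Fin v × Fin v) :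
    (wset B i pq).card ≤ 1 := by
  refine Finset.card_le_one.mpr ?_
  rintro w hw w' hw'
  simp only [wset, mem_filter] at hw hw'
  have he : (B i w.1.1 w.1.2, B i w.2.1 w.2.2) = (B i w'.1.1 w'.1.2, B i w'.2.1 w'.2.2) :=
    hw.2.trans hw'.2.symm
  rw [Prod.mk.injEq] at he
  exact Prod.ext (hB i he.1) (hB i he.2)

lemma wset_nonempty_iff (i : ι) (p q : Fin v) :
    (wset B i (p, q)).Nonempty ↔ PairInBlock B i p q := by
  constructor
  · rintro ⟨w, hw⟩
    simp only [wset, mem_filter, Prod.mk.injEq] at hw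
    exact ⟨w.1.1, w.2.1, w.1.2, w.2.2, hw.1.2, hw.2.1, hw.2.2⟩
  · rintro ⟨a, b, j, j', hab, hj, hj'⟩
    exact ⟨((a, j), (b, j')), by simp [wset, hab, hj, hj']⟩

lemma wset_diag_empty (hB : ∀ i, IsBlock k c (B i)) (i : ι) (p : Fin v) :
    (wset B i (p, p)).card = 0 := by
  rw [Finset.card_eq_zero, Finset.eq_empty_iff_forall_notMem]
  intro w hw
  simp only [wset, mem_filter, Prod.mk.injEq] at hw
  exact hw.1.2 (congrArg Prod.fst (hB i (hw.2.1.trans hw.2.2.symm)))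

lemma sum_wset_card (hB : ∀ i, IsBlock k c (B i))
    (hpair : ∀ p q : Fin v, p ≠ q → ∃! i, PairInBlock B i p q) (pq : Fin v × Fin v) :
    ∑ i, (wset B i pq).card = if pq.1 = pq.2 then 0 else 1 := by
  obtain ⟨p, q⟩ := pq
  by_cases hpq : p = q
  · subst hpq
    simp [wset_diag_empty B hB]
  · simp only [hpq, if_neg, if_false]
    obtain ⟨i₀, hi₀, huniq⟩ := hpair p q hpq
    rw [Finset.sum_eq_single i₀]
    · exact le_antisymm (wset_card_le_one B hB i₀ _)
        (Finset.card_pos.mpr ((wset_nonempty_iff B i₀ p q).mpr hi₀))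
    · intro i _ hi
      rw [Finset.card_eq_zero, Finset.eq_empty_iff_forall_notMem]
      intro w hw
      exact hi (huniq i ((wset_nonempty_iff B i p q).mp ⟨w, hw⟩))
    · intro h; exact absurd (Finset.mem_univ i₀) h

/-- Sum over a finset of `g ∘ f` as a fiber-count weighted sum. -/
lemma sum_eq_sum_fiber_card {α γ : Type*} [Fintype γ] [DecidableEq γ]
    (s : Finset α) (f : α → γ) (g : γ → ℚ) :
    ∑ a ∈ s, g (f a) = ∑ b : γ, ((s.filter fun a => f a = b).card : ℚ) * g b := by
  rw [Finset.sum_comp]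
  rw [Finset.sum_subset (Finset.subset_univ (s.image f)) ?_]
  · exact Finset.sum_congr rfl fun b _ => by rw [nsmul_eq_mul]
  · intro b _ hb
    have : (s.filter fun a => f a = b) = ∅ := by
      rw [Finset.filter_eq_empty_iff]
      intro a ha hfa
      exact hb (Finset.mem_image.mpr ⟨a, ha, hfa⟩)
    rw [this]
    simp

/-- The key quadratic-form identity coming from the pair partition. -/
lemma key_identity (hB : ∀ i, IsBlock k c (B i))
    (hpair : ∀ p q : Fin v, p ≠ q → ∃! i, PairInBlock B i p q) (x : Fin v → ℚ) :
    ∑ i, ∑ a, ∑ b, (if a = b then 0 else (∑ j, x (B i a j)) * (∑ j, x (B i b j))) =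
      (∑ p, x p) ^ 2 - ∑ p, (x p) ^ 2 := by
  have step1 : ∀ i : ι,
      ∑ a, ∑ b, (if a = b then 0 else (∑ j, x (B i a j)) * (∑ j, x (B i b j))) =
      ∑ pq : Fin v × Fin v, ((wset B i pq).card : ℚ) * (x pq.1 * x pq.2) := by
    intro i
    have e1 : ∑ a, ∑ b, (if a = b then 0 else (∑ j, x (B i a j)) * (∑ j, x (B i b j))) =
        ∑ w : (Fin k × Fin c) × (Fin k × Fin c),
          (if w.1.1 = w.2.1 then 0 else x (B i w.1.1 w.1.2) * x (B i w.2.1 w.2.2)) := by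
      rw [Fintype.sum_prod_type]
      simp only [Fintype.sum_prod_type]
      refine Finset.sum_congr rfl fun a _ => ?_
      rw [Finset.sum_comm]
      refine Finset.sum_congr rfl fun b _ => ?_
      by_cases hab : a = b
      · simp [hab]
      · simp only [if_neg hab, Finset.sum_mul_sum]
    have e2 : ∑ w : (Fin k × Fin c) × (Fin k × Fin c),
          (if w.1.1 = w.2.1 then 0 else x (B i w.1.1 w.1.2) * x (B i w.2.1 w.2.2)) =
        ∑ w ∈ (univ.filter fun w : (Fin k × Fin c) × (Fin k × Fin c) => ¬ w.1.1 = w.2.1),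
          x (B i w.1.1 w.1.2) * x (B i w.2.1 w.2.2) := by
      rw [Finset.sum_filter]
      exact Finset.sum_congr rfl fun w _ => by rw [ite_not]
    rw [e1, e2]
    have e3 := sum_eq_sum_fiber_card
      (univ.filter fun w : (Fin k × Fin c) × (Fin k × Fin c) => ¬ w.1.1 = w.2.1)
      (fun w => (B i w.1.1 w.1.2, B i w.2.1 w.2.2))
      (fun pq => x pq.1 * x pq.2)
    simp only at e3
    rw [e3]
    rfl
  calc ∑ i, ∑ a, ∑ b, (if a = b then 0 else (∑ j, x (B i a j)) * (∑ j, x (B i b j)))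
      = ∑ i, ∑ pq : Fin v × Fin v, ((wset B i pq).card : ℚ) * (x pq.1 * x pq.2) :=
        Finset.sum_congr rfl fun i _ => step1 i
    _ = ∑ pq : Fin v × Fin v, ∑ i, ((wset B i pq).card : ℚ) * (x pq.1 * x pq.2) :=
        Finset.sum_comm
    _ = ∑ pq : Fin v × Fin v, (if pq.1 = pq.2 then (0:ℚ) else 1) * (x pq.1 * x pq.2) := by
        refine Finset.sum_congr rfl fun pq _ => ?_
        rw [← Finset.sum_mul, ← Nat.cast_sum, sum_wset_card B hB hpair pq]
        split <;> simp
    _ = (∑ p, x p) ^ 2 - ∑ p, (x p) ^ 2 := by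
        have h1 : ∀ pq : Fin v × Fin v,
            (if pq.1 = pq.2 then (0:ℚ) else 1) * (x pq.1 * x pq.2) =
            x pq.1 * x pq.2 - (if pq.1 = pq.2 then x pq.1 * x pq.2 else 0) := by
          intro pq; split <;> ring
        simp only [h1]
        rw [Finset.sum_sub_distrib]
        congr 1
        · rw [sq, Finset.sum_mul_sum, Fintype.sum_prod_type]
        · rw [Fintype.sum_prod_type]
          refine Finset.sum_congr rfl fun p _ => ?_
          simp [Finset.sum_ite_eq, sq]

/-- Row-sum linear functional. -/
def rowSum (v c : ℕ) (y : Fin c → Fin v) : (Fin v → ℚ) →ₗ[ℚ] ℚ where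
  toFun x := ∑ j, x (y j)
  map_add' x z := by simp [Finset.sum_add_distrib]
  map_smul' r x := by simp [Finset.mul_sum]

/-- Total-sum linear functional. -/
def totSum (v : ℕ) : (Fin v → ℚ) →ₗ[ℚ] ℚ where
  toFun x := ∑ p, x p
  map_add' x z := by simp [Finset.sum_add_distrib]
  map_smul' r x := by simp [Finset.mul_sum]

/-- The linear map collecting the Graham–Pollak constraints. -/
def bigL (m c v : ℕ) {ι : Type} (B : ι → Fin (m + 2) → Fin c → Fin v) :
    (Fin v → ℚ) →ₗ[ℚ] ((ι × Fin (m + 1)) ⊕ Unit → ℚ) :=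
  LinearMap.pi (fun t => Sum.elim
    (fun ia : ι × Fin (m + 1) => rowSum v c (B ia.1 ia.2.succ) - rowSum v c (B ia.1 0))
    (fun _ : Unit => totSum v) t)

lemma bigL_inl (m c v : ℕ) {ι : Type} (B : ι → Fin (m + 2) → Fin c → Fin v)
    (x : Fin v → ℚ) (i : ι) (a : Fin (m + 1)) :
    bigL m c v B x (Sum.inl (i, a)) = (∑ j, x (B i a.succ j)) - ∑ j, x (B i 0 j) := by
  simp [bigL, rowSum, LinearMap.pi_apply]

lemma bigL_inr (m c v : ℕ) {ι : Type} (B : ι → Fin (m + 2) → Fin c → Fin v)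
    (x : Fin v → ℚ) (u : Unit) : bigL m c v B x (Sum.inr u) = ∑ p, x p := by
  simp [bigL, totSum, LinearMap.pi_apply]

lemma sum_offdiag_const (n : ℕ) (r : ℚ) :
    ∑ a : Fin n, ∑ b : Fin n, (if a = b then 0 else r) = (n * (n - 1)) * r := by
  have h : ∀ a : Fin n, ∑ b : Fin n, (if a = b then (0:ℚ) else r) = n * r - r := by
    intro a
    have : ∀ b : Fin n, (if a = b then (0:ℚ) else r) = r - (if a = b then r else 0) := by
      intro b; split <;> ring
    simp only [this]
    rw [Finset.sum_sub_distrib, Finset.sum_ite_eq, Finset.sum_const]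
    simp [mul_comm]
  simp only [h]
  rw [Finset.sum_const]
  simp [card_univ]
  ring

end Helpers


lemma aux_no_design (m c v : ℕ) (hc : 2 ≤ c) (hv : v = (m + 1) * c ^ 2 + 1)
    (ι : Type) [Fintype ι] (B : ι → Fin (m + 2) → Fin c → Fin v)
    (hblock : ∀ i, IsBlock (m + 2) c (B i))
    (hpair : ∀ p q : Fin v, p ≠ q → ∃! i, PairInBlock B i p q) : False := by
  set b : ℕ := Fintype.card ι with hbdef
  -- counting: b * (m+2) = v
  have hone := key_identity B hblock hpair (fun _ => 1)
  simp only [Finset.sum_const, Finset.card_univ, Fintype.card_fin, nsmul_eq_mul, mul_one] at hone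
  rw [sum_offdiag_const] at hone
  have hvq : ((v : ℚ)) = (m + 1) * c ^ 2 + 1 := by rw [hv]; push_cast; ring
  have hbk : (b : ℚ) * (m + 2) = v := by
    have hc0 : ((m : ℚ) + 1) * c ^ 2 ≠ 0 := by positivity
    have key : (b : ℚ) * (m + 2) * ((m + 1) * c ^ 2) = (v : ℚ) * ((m + 1) * c ^ 2) := by
      push_cast at hone ⊢
      nlinarith [hone, hvq]
    exact mul_right_cancel₀ hc0 key
  have hbkn : b * (m + 2) = v := by exact_mod_cast hbk
  have hcsq : 4 ≤ c ^ 2 := by nlinarith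
  have hb2 : 2 ≤ b := by nlinarith [hbkn, hcsq, hv]
  have hdim : b * (m + 1) + 1 < v := by nlinarith [hbkn]
  -- linear map with small codomain
  obtain ⟨x, hxker, hx0⟩ : ∃ x, x ∈ LinearMap.ker (bigL m c v B) ∧ x ≠ 0 := by
    rw [← Submodule.ne_bot_iff]
    intro hbot
    have hinj : Function.Injective (bigL m c v B) := LinearMap.ker_eq_bot.mp hbot
    have hle := LinearMap.finrank_le_finrank_of_injective hinj
    rw [Module.finrank_fintype_fun_eq_card, Module.finrank_fintype_fun_eq_card,
      Fintype.card_fin, Fintype.card_sum, Fintype.card_prod, Fintype.card_fin,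
      Fintype.card_unit] at hle
    rw [← hbdef] at hle
    omega
  have hLx : bigL m c v B x = 0 := LinearMap.mem_ker.mp hxker
  have hS : ∀ (i : ι) (a : Fin (m + 2)), (∑ j, x (B i a j)) = ∑ j, x (B i 0 j) := by
    intro i a
    refine Fin.cases rfl (fun a' => ?_) a
    have h := (bigL_inl m c v B x i a').symm.trans (congrFun hLx (Sum.inl (i, a')))
    rw [Pi.zero_apply, sub_eq_zero] at h
    exact h
  have htot : (∑ p, x p) = 0 := by
    have h := (bigL_inr m c v B x ()).symm.trans (congrFun hLx (Sum.inr ()))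
    rw [Pi.zero_apply] at h
    exact h
  have hid := key_identity B hblock hpair x
  rw [htot] at hid
  have hL0 : (0:ℚ) ≤ ∑ i, ∑ a, ∑ b',
      (if a = b' then 0 else (∑ j, x (B i a j)) * (∑ j, x (B i b' j))) := by
    refine Finset.sum_nonneg fun i _ => ?_
    have hrw : ∀ a b' : Fin (m + 2),
        (if a = b' then (0:ℚ) else (∑ j, x (B i a j)) * (∑ j, x (B i b' j))) =
        (if a = b' then 0 else (∑ j, x (B i 0 j)) * (∑ j, x (B i 0 j))) := by
      intro a b'; rw [hS i a, hS i b']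
    simp only [hrw]
    rw [sum_offdiag_const]
    have h1 : (0:ℚ) ≤ (∑ j, x (B i 0 j)) * (∑ j, x (B i 0 j)) := mul_self_nonneg _
    have h2 : (0:ℚ) ≤ ((m + 2 : ℕ) : ℚ) * ((m + 2 : ℕ) - 1) := by
      push_cast; nlinarith [Nat.cast_nonneg (α := ℚ) m]
    exact mul_nonneg h2 h1
  rw [hid] at hL0
  have hsqnn : (0:ℚ) ≤ ∑ p, (x p) ^ 2 := Finset.sum_nonneg fun p _ => sq_nonneg _
  have hsq : ∑ p, (x p) ^ 2 = 0 := by nlinarith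
  apply hx0
  funext p
  have hp := (Finset.sum_eq_zero_iff_of_nonneg
    (fun p _ => sq_nonneg (x p))).mp hsq p (Finset.mem_univ p)
  exact pow_eq_zero_iff (by norm_num) |>.mp hp

theorem no_splitting_design_kminus1_csq_plus_one
    (k c : ℕ) (hk : 2 ≤ k) (hc : 2 ≤ c) :
    ¬ SplittingDesignExists 2 ((k - 1) * c ^ 2 + 1) k c 1 := by
  obtain ⟨m, rfl⟩ : ∃ m, k = m + 2 := ⟨k - 2, by omega⟩
  rintro ⟨ι, _, B, d⟩
  have hpair : ∀ p q : Fin ((m + 2 - 1) * c ^ 2 + 1), p ≠ q → ∃! i, PairInBlock B i p q := by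
    intro p q hpq
    have hcard : ({p, q} : Finset (Fin ((m + 2 - 1) * c ^ 2 + 1))).card = 2 :=
      Finset.card_pair hpq
    have hb := d.balance {p, q} hcard
    rw [Nat.card_eq_one_iff_unique] at hb
    obtain ⟨hsub, ⟨⟨i₀, hi₀⟩⟩⟩ := hb
    refine ⟨i₀, (occurs_iff_pairInBlock B i₀ p q hpq).mp hi₀, fun i hi => ?_⟩
    have heq : (⟨i, (occurs_iff_pairInBlock B i p q hpq).mpr hi⟩ :
        {j : ι // OccursInDistinctRows (B j) {p, q}}) = ⟨i₀, hi₀⟩ := Subsingleton.elim _ _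
    exact congrArg Subtype.val heq
  exact aux_no_design m c ((m + 2 - 1) * c ^ 2 + 1) hc rfl ι B d.block hpair
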